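/- In the mobile-catalyst construction with membrane structure [ [ ]_2 [ ]_3 ]_1, the SUB-simulation rule c l_i → (c, in)(l_i, in) followed by the membrane check rule c l_i → c l_i' (available only in membrane r+1) guarantees: the catalyst and the label object enter the same inner membrane, and if that membrane is not membrane r+1 then the rule l_i → # must fire and the computation never halts. -/

import Mathlib

attribute [local instance 5] Classical.propDecidable

/-- Targets: `here`, `out`, `in` (a non-deterministically chosen inner membrane). -/
inductive Tgt : Type
  | here | out | inn
deriving DecidableEq

/-- A rule of a P system with a mobile catalyst: non-cooperative `a → (v, tgt)`
(`cata = false`) or catalytic `c a → (c, tgt)(v, tgt)` (`cata = true`; the moving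
catalyst is part of `rhs`); all right-hand-side objects carry the same target. -/
structure MCRule (O : Type) where
  cata : Bool
  lhs : O
  rhs : Multiset O
  tgt : Tgt

/-- A P system with `n + 1` membranes (the skin, region `0`, containing the elementary
membranes `1, …, n`) and one mobile catalyst `cat`. -/
structure MCSystem (n : ℕ) (O : Type) where
  cat : O
  R : Fin (n+1) → Set (MCRule O)
  w0 : Fin (n+1) → Multiset O

variable {n : ℕ} {O : Type} [DecidableEq O]

/-- The multiset consumed by one application of `ρ`. -/
def mcLhs (c : O) (ρ : MCRule O) : Multiset O :=
  if ρ.cata then {c, ρ.lhs} else {ρ.lhs}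

/-- The destination region of the products of a rule applied in region `i` with
target `t` and chosen inner membrane `d`; `none` denotes the environment. -/
def mcDest (i : Fin (n+1)) (t : Tgt) (d : Fin (n+1)) : Option (Fin (n+1)) :=
  match t with
  | Tgt.here => some i
  | Tgt.out => if i = 0 then none else some 0
  | Tgt.inn => some d

/-- A configuration: the contents of the `n + 1` regions and of the environment. -/
abbrev MCConfig (n : ℕ) (O : Type) := (Fin (n+1) → Multiset O) × Multiset O

/-- One non-deterministic maximally parallel step: a multiset of rule applications
`(region, rule, chosen inner membrane)` such that no further rule is applicable
to the remaining objects of any region. -/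
def MCStep (Q : MCSystem n O) : MCConfig n O → MCConfig n O → Prop :=
  fun cfg cfg' => ∃ apps : Multiset (Fin (n+1) × MCRule O × Fin (n+1)),
    (let consAt : Fin (n+1) → Multiset O := fun i =>
       ((apps.filter (fun p => p.1 = i)).map (fun p => mcLhs Q.cat p.2.1)).sum
     let delivTo : Option (Fin (n+1)) → Multiset O := fun a =>
       ((apps.filter (fun p => mcDest p.1 p.2.1.tgt p.2.2 = a)).map
          (fun p => p.2.1.rhs)).sum
     apps ≠ 0 ∧
     (∀ p ∈ apps, p.2.1 ∈ Q.R p.1 ∧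
        (p.2.1.tgt = Tgt.inn → p.1 = 0 ∧ p.2.2 ≠ 0)) ∧
     (∀ i, consAt i ≤ cfg.1 i) ∧
     (∀ i, ¬ ∃ ρ ∈ Q.R i, mcLhs Q.cat ρ ≤ cfg.1 i - consAt i ∧
        (ρ.tgt = Tgt.inn → i = 0 ∧ 1 ≤ n)) ∧
     (∀ j, cfg'.1 j = cfg.1 j - consAt j + delivTo (some j)) ∧
     cfg'.2 = cfg.2 + delivTo none)

/-- No rule is applicable in any region. -/
def MCHalted (Q : MCSystem n O) (cfg : MCConfig n O) : Prop :=
  ∀ i, ¬ ∃ ρ ∈ Q.R i, mcLhs Q.cat ρ ≤ cfg.1 i ∧ (ρ.tgt = Tgt.inn → i = 0 ∧ 1 ≤ n)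

/-- `Ps(Q)`: Parikh vectors (w.r.t. the output symbols `a i`) of the environment
contents of halting computations. -/
def MCPs {k : ℕ} (Q : MCSystem n O) (a : Fin k → O) : Set (Fin k → ℕ) :=
  { v | ∃ cfg : MCConfig n O,
      Relation.ReflTransGen (MCStep Q) (Q.w0, 0) cfg ∧ MCHalted Q cfg ∧
      (∀ i, cfg.2.count (a i) = v i) ∧ (∀ x ∈ cfg.2, ∃ i, x = a i) }

/-- `N(Q)`: the numbers of objects sent to the environment in halting computations. -/
def MCN (Q : MCSystem n O) : Set ℕ :=
  { m | ∃ cfg : MCConfig n O,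
      Relation.ReflTransGen (MCStep Q) (Q.w0, 0) cfg ∧ MCHalted Q cfg ∧
      Multiset.card cfg.2 = m }

/-- `S` is recursively enumerable. -/
def REset {α : Type} [Primcodable α] (S : Set α) : Prop :=
  ∃ f : α →. Unit, Partrec f ∧ ∀ a, a ∈ S ↔ (f a).Dom

/-! ### The mobile-catalyst SUB gadget -/

/-- Objects of the gadget for `l_i : (SUB(r), l_j, l_k)`: the mobile catalyst `c`,
the labels `l_i, l_i', l_i'', l_i''', l_j, l_k`, the register symbols `a₁, a₂`
and the trap symbol `#`. -/
inductive J : Type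
  | c | li | li' | li'' | li''' | lj | lk | a1 | a2 | trap
deriving DecidableEq

open J

/-- The register symbol `a_r`. -/
def aR (r : ℕ) : J := if r = 1 then a1 else a2
/-- The register symbol `a_{3-r}`. -/
def aO (r : ℕ) : J := if r = 1 then a2 else a1
/-- The region of membrane `r + 1` (the skin is region `0`, membrane `2` is
region `1`, membrane `3` is region `2`). -/
def rightIdx (r : ℕ) : Fin 3 := if r = 1 then 1 else 2
/-- The region of the other inner membrane, `4 - r`. -/
def otherIdx (r : ℕ) : Fin 3 := if r = 1 then 2 else 1

/-- The rules of the gadget (restricted to the objects above), with membrane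
structure `[ [ ]₂ [ ]₃ ]₁`: skin rules `c l_i → (c, in)(l_i, in)`,
`c l_i''' → c l_j`, `l_i''' → #`, `# → #`; rules of membrane `r+1`:
`l_i → #`, `c l_i → c l_i'`, `l_i' → l_i''`, `c a_r → (c, out)`,
`c l_i'' → (c, out)(l_k, out)`, `l_i'' → (l_i''', out)`, `a_{3-r} → #`, `# → #`;
rules of membrane `4-r`: `l_i → #`, `c a_{3-r} → (c, out)`, `a_r → #`, `# → #`. -/
def QJ (r : ℕ) : MCSystem 2 J where
  cat := c
  R := fun i =>
    if i = 0 then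
      {⟨true, li, {c, li}, Tgt.inn⟩,
       ⟨true, li''', {c, lj}, Tgt.here⟩,
       ⟨false, li''', {trap}, Tgt.here⟩,
       ⟨false, trap, {trap}, Tgt.here⟩}
    else if i = rightIdx r then
      {⟨false, li, {trap}, Tgt.here⟩,
       ⟨true, li, {c, li'}, Tgt.here⟩,
       ⟨false, li', {li''}, Tgt.here⟩,
       ⟨true, aR r, {c}, Tgt.out⟩,
       ⟨true, li'', {c, lk}, Tgt.out⟩,
       ⟨false, li'', {li'''}, Tgt.out⟩,
       ⟨false, aO r, {trap}, Tgt.here⟩,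
       ⟨false, trap, {trap}, Tgt.here⟩}
    else
      {⟨false, li, {trap}, Tgt.here⟩,
       ⟨true, aO r, {c}, Tgt.out⟩,
       ⟨false, aR r, {trap}, Tgt.here⟩,
       ⟨false, trap, {trap}, Tgt.here⟩}
  w0 := fun i => if i = 0 then {c, li} else 0


/-! ### Auxiliary lemmas -/

open J in
private def ruleIn : MCRule J := ⟨true, li, {c, li}, Tgt.inn⟩
open J in
private def ruleLiTrap : MCRule J := ⟨false, li, {trap}, Tgt.here⟩
open J in
private def ruleTrapTrap : MCRule J := ⟨false, trap, {trap}, Tgt.here⟩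

private lemma mem_msum {α : Type*} {s : Multiset (Multiset α)} {a : α} :
    a ∈ s.sum ↔ ∃ m ∈ s, a ∈ m := by
  induction s using Multiset.induction_on with
  | empty => simp
  | cons x t ih => simp [ih]

open J in
private lemma mcLhs_ne_zero (ρ : MCRule J) : mcLhs c ρ ≠ 0 := by
  unfold mcLhs; split <;> simp

open J in
private lemma noapply_right (r : ℕ) (hr : r = 1 ∨ r = 2) (p : ℕ) :
    ∀ ρ ∈ (QJ r).R (rightIdx r), ¬ mcLhs c ρ ≤ Multiset.replicate p (aR r) := by
  intro ρ hρ hle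
  have hmem : ∀ x ∈ mcLhs c ρ, x = aR r := by
    intro x hx
    exact Multiset.eq_of_mem_replicate (Multiset.mem_of_le hle hx)
  rcases hr with rfl | rfl <;>
  · simp only [QJ, rightIdx, if_pos rfl, Set.mem_insert_iff,
      Set.mem_singleton_iff, show ((if (1:ℕ) = 1 then (1:Fin 3) else 2) ≠ 0 ∧
        (if (2:ℕ) = 1 then (1:Fin 3) else 2) ≠ 0) by decide |>.1] at hρ
    rcases hρ with rfl|rfl|rfl|rfl|rfl|rfl|rfl|rfl <;>
      simpa [mcLhs, aR, aO] using hmem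

open J in
private lemma noapply_other (r : ℕ) (hr : r = 1 ∨ r = 2) (q : ℕ) :
    ∀ ρ ∈ (QJ r).R (otherIdx r), ¬ mcLhs c ρ ≤ Multiset.replicate q (aO r) := by
  intro ρ hρ hle
  have hmem : ∀ x ∈ mcLhs c ρ, x = aO r := by
    intro x hx
    exact Multiset.eq_of_mem_replicate (Multiset.mem_of_le hle hx)
  rcases hr with rfl | rfl <;>
  · simp only [QJ, otherIdx, rightIdx, Set.mem_insert_iff,
      Set.mem_singleton_iff] at hρ
    rcases hρ with rfl|rfl|rfl|rfl <;>
      simpa [mcLhs, aR, aO] using hmem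

open J in
private lemma memR_other (r : ℕ) (hr : r = 1 ∨ r = 2) :
    ruleLiTrap ∈ (QJ r).R (otherIdx r) ∧ ruleTrapTrap ∈ (QJ r).R (otherIdx r) ∧
    (∀ ρ ∈ (QJ r).R (otherIdx r), ρ ≠ ruleLiTrap → ρ ≠ ruleTrapTrap →
      li ∉ mcLhs c ρ ∧ trap ∉ mcLhs c ρ) := by
  rcases hr with rfl | rfl <;>
  · refine ⟨by simp [QJ, otherIdx, rightIdx, ruleLiTrap],
      by simp [QJ, otherIdx, rightIdx, ruleTrapTrap], ?_⟩
    intro ρ hρ h1 h2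
    simp only [QJ, otherIdx, rightIdx, Set.mem_insert_iff,
      Set.mem_singleton_iff] at hρ
    rcases hρ with rfl|rfl|rfl|rfl <;>
      simp_all [mcLhs, aR, aO, ruleLiTrap, ruleTrapTrap]

open J in
private lemma not_halted_of_inv (r : ℕ) (hr : r = 1 ∨ r = 2) (z : MCConfig 2 J)
    (hI : li ∈ z.1 (otherIdx r) ∨ trap ∈ z.1 (otherIdx r)) :
    ¬ MCHalted (QJ r) z := by
  intro hH
  obtain ⟨hlt, htt, -⟩ := memR_other r hr
  rcases hI with hI | hI
  · exact hH (otherIdx r) ⟨ruleLiTrap, hlt,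
      by simpa [mcLhs, ruleLiTrap] using Multiset.singleton_le.2 hI,
      by simp [ruleLiTrap]⟩
  · exact hH (otherIdx r) ⟨ruleTrapTrap, htt,
      by simpa [mcLhs, ruleTrapTrap] using Multiset.singleton_le.2 hI,
      by simp [ruleTrapTrap]⟩

open J in
private lemma step_preserves_inv (r : ℕ) (hr : r = 1 ∨ r = 2)
    (z z' : MCConfig 2 J) (hst : MCStep (QJ r) z z')
    (hI : li ∈ z.1 (otherIdx r) ∨ trap ∈ z.1 (otherIdx r)) :
    li ∈ z'.1 (otherIdx r) ∨ trap ∈ z'.1 (otherIdx r) := by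
  obtain ⟨apps, hne, hmem, hcons, hmax, hupd, henv⟩ := hst
  set D := otherIdx r with hD
  by_cases hex : ∃ p ∈ apps, p.1 = D ∧ (p.2.1 = ruleLiTrap ∨ p.2.1 = ruleTrapTrap)
  · -- a trap-producing rule fires in region D, delivering `trap` to D
    obtain ⟨p, hp, hp1, hpr⟩ := hex
    right
    rw [hupd D]
    refine Multiset.mem_add.2 (Or.inr ?_)
    refine mem_msum.2 ⟨p.2.1.rhs, Multiset.mem_map_of_mem _ ?_, ?_⟩
    · refine Multiset.mem_filter.2 ⟨hp, ?_⟩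
      rcases hpr with h | h <;>
        simp [h, hp1, ruleLiTrap, ruleTrapTrap, mcDest]
    · rcases hpr with h | h <;> simp [h, ruleLiTrap, ruleTrapTrap]
  · -- no rule consuming li / trap fires in region D
    push_neg at hex
    have hnc : ∀ x ∈ (((apps.filter (fun p => p.1 = D)).map
        (fun p => mcLhs (QJ r).cat p.2.1)).sum), x ≠ li ∧ x ≠ trap := by
      intro x hx
      obtain ⟨m, hm, hxm⟩ := mem_msum.1 hx
      obtain ⟨p, hpf, rfl⟩ := Multiset.mem_map.1 hm
      obtain ⟨hpa, hp1⟩ := Multiset.mem_filter.1 hpf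
      have hρ : p.2.1 ∈ (QJ r).R D := hp1 ▸ (hmem p hpa).1
      have h1 : p.2.1 ≠ ruleLiTrap ∧ p.2.1 ≠ ruleTrapTrap := by
        constructor <;> intro h <;>
          exact absurd (hex p hpa hp1) (by simp [h])
      obtain ⟨hli, htr⟩ := (memR_other r hr).2.2 p.2.1 hρ h1.1 h1.2
      constructor <;> rintro rfl <;> [exact hli hxm; exact htr hxm]
    have key : ∀ a : J, a ∈ z.1 D → (a = li ∨ a = trap) → a ∈ z'.1 D := by
      intro a ha haa
      rw [hupd D]
      refine Multiset.mem_add.2 (Or.inl ?_)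
      rw [← Multiset.count_pos, Multiset.count_sub]
      have h0 : Multiset.count a (((apps.filter (fun p => p.1 = D)).map
          (fun p => mcLhs (QJ r).cat p.2.1)).sum) = 0 := by
        rw [Multiset.count_eq_zero]
        intro hmem'
        rcases haa with rfl | rfl
        · exact (hnc _ hmem').1 rfl
        · exact (hnc _ hmem').2 rfl
      rw [h0]
      simpa using Multiset.count_pos.2 ha
    rcases hI with hI | hI
    · exact Or.inl (key _ hI (Or.inl rfl))
    · exact Or.inr (key _ hI (Or.inr rfl))


private lemma filter_map_sum_singleton {α β : Type*} (x : α) (pr : α → Prop)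
    [DecidablePred pr] (f : α → Multiset β) :
    ((({x} : Multiset α).filter pr).map f).sum = if pr x then f x else 0 := by
  by_cases h : pr x <;> simp [Multiset.filter_singleton, h]

private lemma mkStep (Q : MCSystem n O) (cfg : MCConfig n O)
    (apps : Multiset (Fin (n+1) × MCRule O × Fin (n+1)))
    (h1 : apps ≠ 0)
    (h2 : ∀ p ∈ apps, p.2.1 ∈ Q.R p.1 ∧ (p.2.1.tgt = Tgt.inn → p.1 = 0 ∧ p.2.2 ≠ 0))
    (h3 : ∀ i, ((apps.filter (fun p => p.1 = i)).map
        (fun p => mcLhs Q.cat p.2.1)).sum ≤ cfg.1 i)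
    (h4 : ∀ i, ¬ ∃ ρ ∈ Q.R i, mcLhs Q.cat ρ ≤ cfg.1 i -
        ((apps.filter (fun p => p.1 = i)).map (fun p => mcLhs Q.cat p.2.1)).sum ∧
        (ρ.tgt = Tgt.inn → i = 0 ∧ 1 ≤ n)) :
    ∃ cfg', MCStep Q cfg cfg' :=
  ⟨(fun j => cfg.1 j - ((apps.filter (fun p => p.1 = j)).map
        (fun p => mcLhs Q.cat p.2.1)).sum +
      ((apps.filter (fun p => mcDest p.1 p.2.1.tgt p.2.2 = some j)).map
        (fun p => p.2.1.rhs)).sum,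
    cfg.2 + ((apps.filter (fun p => mcDest p.1 p.2.1.tgt p.2.2 = none)).map
        (fun p => p.2.1.rhs)).sum),
   apps, h1, h2, h3, h4, fun _ => rfl, rfl⟩

open J in
private lemma rule0_cases : ∀ ρ ∈ (QJ 1).R 0 ∪ (QJ 2).R 0,
    ρ = ruleIn ∨ ¬ mcLhs c ρ ≤ ({c, li} : Multiset J) := by
  intro ρ hρ
  simp only [QJ, Set.mem_union, if_pos rfl, Set.mem_insert_iff,
    Set.mem_singleton_iff] at hρ
  rcases hρ with (rfl|rfl|rfl|rfl)|(rfl|rfl|rfl|rfl)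
  all_goals first
    | (left; rfl)
    | (right; decide)

/-- in the mobile-catalyst construction, the rule
`c l_i → (c, in)(l_i, in)` sends the catalyst and the label object to the *same*
inner membrane, and if that membrane is not membrane `r + 1`, then `l_i → #` must
fire there in the next step and the computation can never halt. -/
theorem statement11 (r : ℕ) (hr : r = 1 ∨ r = 2) (p q : ℕ) (e : Multiset J)
    (cfg : MCConfig 2 J)
    (hcfg : cfg = (fun i =>
        if i = 0 then {c, li}
        else if i = rightIdx r then Multiset.replicate p (aR r)
        else Multiset.replicate q (aO r), e)) :
    (∃ cfg', MCStep (QJ r) cfg cfg') ∧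
    ∀ cfg', MCStep (QJ r) cfg cfg' →
      ∃ j : Fin 3, j ≠ 0 ∧ c ∈ cfg'.1 j ∧ li ∈ cfg'.1 j ∧
        (j ≠ rightIdx r →
          (∀ z, MCStep (QJ r) cfg' z → trap ∈ z.1 j) ∧
          (∀ z, Relation.ReflTransGen (MCStep (QJ r)) cfg' z →
            ¬ MCHalted (QJ r) z))  := by
  subst hcfg
  have hR0 : rightIdx r ≠ 0 := by rcases hr with rfl | rfl <;> decide
  have hO0 : otherIdx r ≠ 0 := by rcases hr with rfl | rfl <;> decide
  have hRO : rightIdx r ≠ otherIdx r := by rcases hr with rfl | rfl <;> decide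
  have htri : ∀ j : Fin 3, j = 0 ∨ j = rightIdx r ∨ j = otherIdx r := by
    rcases hr with rfl | rfl <;> decide
  have hcat : (QJ r).cat = c := rfl
  set w : Fin 3 → Multiset J := fun i =>
      if i = 0 then ({c, li} : Multiset J)
      else if i = rightIdx r then Multiset.replicate p (aR r)
      else Multiset.replicate q (aO r) with hw
  have hw0 : w 0 = {c, li} := by simp [hw]
  have hwR : w (rightIdx r) = Multiset.replicate p (aR r) := by simp [hw, hR0]
  have hwO : w (otherIdx r) = Multiset.replicate q (aO r) := by
    simp [hw, hO0, (Ne.symm hRO : otherIdx r ≠ rightIdx r)]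
  have hrule0 : ∀ ρ ∈ (QJ r).R 0, ρ = ruleIn ∨ ¬ mcLhs c ρ ≤ ({c, li} : Multiset J) := by
    intro ρ hρ
    refine rule0_cases ρ ?_
    rcases hr with rfl | rfl
    · exact Set.mem_union_left _ hρ
    · exact Set.mem_union_right _ hρ
  constructor
  · -- existence of a step
    refine mkStep (QJ r) _ {((0 : Fin 3), ruleIn, rightIdx r)} (by simp) ?_ ?_ ?_
    · intro pp hpp
      rw [Multiset.mem_singleton] at hpp
      subst hpp
      exact ⟨by simp [QJ, ruleIn], fun _ => ⟨rfl, hR0⟩⟩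
    · intro i
      rw [filter_map_sum_singleton]
      by_cases h : ((0 : Fin 3), ruleIn, rightIdx r).1 = i
      · rw [if_pos h]
        have : w i = {c, li} := by rw [← h]; exact hw0
        show mcLhs (QJ r).cat ruleIn ≤ w i
        rw [this]
        exact le_of_eq rfl
      · rw [if_neg h]; exact zero_le
    · intro i hcontra
      obtain ⟨ρ, hρ, hle, -⟩ := hcontra
      rw [filter_map_sum_singleton] at hle
      rcases htri i with rfl | hiR | hiO
      · rw [if_pos rfl] at hle
        have hle1 : mcLhs (QJ r).cat ρ ≤ w 0 - mcLhs (QJ r).cat ruleIn := hle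
        have hle0 : mcLhs (QJ r).cat ρ ≤ 0 := by
          have h9 : w 0 - mcLhs (QJ r).cat ruleIn = 0 := by rw [hw0]; rfl
          rwa [h9] at hle1
        exact mcLhs_ne_zero ρ (Multiset.le_zero.1 hle0)
      · subst hiR
        rw [if_neg (fun h => hR0 h.symm)] at hle
        have hle1 : mcLhs (QJ r).cat ρ ≤ w (rightIdx r) - 0 := hle
        rw [Multiset.sub_zero, hwR] at hle1
        exact noapply_right r hr p ρ hρ hle1
      · subst hiO
        rw [if_neg (fun h => hO0 h.symm)] at hle
        have hle1 : mcLhs (QJ r).cat ρ ≤ w (otherIdx r) - 0 := hle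
        rw [Multiset.sub_zero, hwO] at hle1
        exact noapply_other r hr q ρ hρ hle1
  · -- analysis of an arbitrary step
    intro cfg' hstep
    obtain ⟨apps, hne, hmem, hcons, hmax, hupd, henv⟩ := hstep
    have hall : ∀ pp ∈ apps, pp.1 = 0 ∧ pp.2.1 = ruleIn := by
      intro pp hpp
      have hle : mcLhs (QJ r).cat pp.2.1 ≤
          ((apps.filter (fun p => p.1 = pp.1)).map
            (fun p => mcLhs (QJ r).cat p.2.1)).sum :=
        Multiset.single_le_sum (fun x _ => zero_le) _
          (Multiset.mem_map_of_mem _ (Multiset.mem_filter.2 ⟨hpp, rfl⟩))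
      have hle2 : mcLhs (QJ r).cat pp.2.1 ≤ w pp.1 := le_trans hle (hcons pp.1)
      have hρ := (hmem pp hpp).1
      rcases htri pp.1 with h0 | hR | hO
      · refine ⟨h0, ?_⟩
        rw [h0] at hρ hle2
        rw [hw0] at hle2
        rcases hrule0 pp.2.1 hρ with h | h
        · exact h
        · exact absurd hle2 h
      · exfalso
        rw [hR] at hρ hle2
        rw [hwR] at hle2
        exact noapply_right r hr p pp.2.1 hρ hle2
      · exfalso
        rw [hO] at hρ hle2
        rw [hwO] at hle2
        exact noapply_other r hr q pp.2.1 hρ hle2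
    -- apps is a singleton
    have hcard : Multiset.card apps = 1 := by
      have hfe : apps.filter (fun p => p.1 = (0 : Fin 3)) = apps :=
        Multiset.filter_eq_self.2 (fun pp hpp => (hall pp hpp).1)
      have hm : apps.map (fun pp => mcLhs (QJ r).cat pp.2.1) =
          Multiset.replicate (Multiset.card apps) ({c, li} : Multiset J) := by
        rw [Multiset.eq_replicate]
        refine ⟨by simp, ?_⟩
        intro b hb
        obtain ⟨pp, hpp, rfl⟩ := Multiset.mem_map.1 hb
        rw [(hall pp hpp).2]; rfl
      have h1 : ((apps.filter (fun pp => pp.1 = (0 : Fin 3))).map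
          (fun pp => mcLhs (QJ r).cat pp.2.1)).sum ≤ w 0 := hcons 0
      rw [hfe, hm, Multiset.sum_replicate, hw0] at h1
      have h2 := Multiset.count_le_of_le c h1
      rw [Multiset.count_nsmul] at h2
      have h3 : Multiset.count c ({c, li} : Multiset J) = 1 := by decide
      rw [h3] at h2
      simp only [mul_one] at h2
      have h4 : 0 < Multiset.card apps := Multiset.card_pos.2 hne
      omega
    obtain ⟨p0, rfl⟩ := Multiset.card_eq_one.1 hcard
    obtain ⟨h01, hr0⟩ := hall p0 (Multiset.mem_singleton_self p0)
    have htgt : p0.2.1.tgt = Tgt.inn := by rw [hr0]; rfl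
    have hd0 : p0.2.2 ≠ 0 := ((hmem p0 (Multiset.mem_singleton_self p0)).2 htgt).2
    set d := p0.2.2 with hdd
    have hdest : mcDest p0.1 p0.2.1.tgt p0.2.2 = some d := by
      rw [htgt]; rfl
    have hrhs : p0.2.1.rhs = ({c, li} : Multiset J) := by rw [hr0]; rfl
    have hupd' : ∀ j, cfg'.1 j = w j -
        ((({p0} : Multiset _).filter (fun pp => pp.1 = j)).map
          (fun pp => mcLhs (QJ r).cat pp.2.1)).sum +
        ((({p0} : Multiset _).filter
            (fun pp => mcDest pp.1 pp.2.1.tgt pp.2.2 = some j)).map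
          (fun pp => pp.2.1.rhs)).sum := hupd
    have hcfgd : cfg'.1 d = w d + ({c, li} : Multiset J) := by
      rw [hupd' d, filter_map_sum_singleton, filter_map_sum_singleton]
      rw [if_neg (show ¬ p0.1 = d by rw [h01]; exact fun h => hd0 h.symm)]
      rw [if_pos hdest, hrhs, Multiset.sub_zero]
    refine ⟨d, hd0, ?_, ?_, ?_⟩
    · rw [hcfgd]; simp
    · rw [hcfgd]; simp
    intro hdne
    have hdo : d = otherIdx r := by
      rcases htri d with h | h | h
      · exact absurd h hd0
      · exact absurd h hdne
      · exact h
    have hcd : cfg'.1 d = Multiset.replicate q (aO r) + ({c, li} : Multiset J) := by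
      rw [hcfgd, hdo, hwO]
    obtain ⟨hltR, httR, hother⟩ := memR_other r hr
    constructor
    · -- next step must produce trap in region d
      intro z hz
      obtain ⟨apps2, hne2, hmem2, hcons2, hmax2, hupd2, -⟩ := hz
      by_cases hex : ∃ pp ∈ apps2, pp.1 = d ∧ pp.2.1 = ruleLiTrap
      · obtain ⟨pp, hpp, hpp1, hppr⟩ := hex
        rw [hupd2 d]
        refine Multiset.mem_add.2 (Or.inr (mem_msum.2 ⟨pp.2.1.rhs,
          Multiset.mem_map_of_mem _ (Multiset.mem_filter.2 ⟨hpp, ?_⟩), ?_⟩))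
        · rw [hppr, hpp1]; rfl
        · rw [hppr]; simp [ruleLiTrap]
      · exfalso
        push_neg at hex
        have hnli : li ∉ (((apps2.filter (fun pp => pp.1 = d)).map
            (fun pp => mcLhs (QJ r).cat pp.2.1)).sum) := by
          intro hmem'
          obtain ⟨m, hm, hxm⟩ := mem_msum.1 hmem'
          obtain ⟨pp, hpf, rfl⟩ := Multiset.mem_map.1 hm
          obtain ⟨hpa, hp1⟩ := Multiset.mem_filter.1 hpf
          have hρ2 : pp.2.1 ∈ (QJ r).R (otherIdx r) := by
            rw [← hdo, ← hp1]; exact (hmem2 pp hpa).1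
          by_cases htt : pp.2.1 = ruleTrapTrap
          · rw [htt, hcat] at hxm
            exact (by decide : li ∉ mcLhs c ruleTrapTrap) hxm
          · exact (hother pp.2.1 hρ2 (fun h => hex pp hpa hp1 h) htt).1 hxm
        have hlirem : li ∈ cfg'.1 d - (((apps2.filter (fun pp => pp.1 = d)).map
            (fun pp => mcLhs (QJ r).cat pp.2.1)).sum) := by
          rw [← Multiset.count_pos, Multiset.count_sub]
          rw [Multiset.count_eq_zero.2 hnli]
          have : li ∈ cfg'.1 d := by rw [hcd]; simp
          simpa using Multiset.count_pos.2 this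
        exact hmax2 d ⟨ruleLiTrap, hdo ▸ hltR,
          by simpa [mcLhs, ruleLiTrap] using Multiset.singleton_le.2 hlirem,
          by simp [ruleLiTrap]⟩
    · -- the computation can never halt
      intro z hz2
      have hinv : li ∈ z.1 (otherIdx r) ∨ trap ∈ z.1 (otherIdx r) := by
        clear hupd henv hcons hmax
        induction hz2 with
        | refl => exact Or.inl (by rw [← hdo, hcd]; simp)
        | tail _ hbc ih => exact step_preserves_inv r hr _ _ hbc ih
      exact not_halted_of_inv r hr z hinv
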